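/- Let φ : ℝ^m → ℝ^n be a linear map. Then the restriction of φ to the nonnegative orthant ℝ_{≥0}^m is a proper map of topological spaces (preimages of compact sets are compact) if and only if ker(φ) ∩ ℝ_{≥0}^m = {0}. -/

import Mathlib

open Set Metric

/-- The restriction of a linear map `φ : ℝ^m → ℝ^n` to the nonnegative orthant is a
proper map of topological spaces if and only if `ker φ ∩ ℝ_{≥0}^m = {0}`. -/
theorem stmt2 (m n : ℕ) (φ : (Fin m → ℝ) →ₗ[ℝ] (Fin n → ℝ)) :
    (Continuous (fun x : {x : Fin m → ℝ // ∀ i, 0 ≤ x i} => φ x.1) ∧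
      ∀ K : Set (Fin n → ℝ), IsCompact K →
        IsCompact ((fun x : {x : Fin m → ℝ // ∀ i, 0 ≤ x i} => φ x.1) ⁻¹' K)) ↔
    ∀ x : Fin m → ℝ, (∀ i, 0 ≤ x i) → φ x = 0 → x = 0 := by
  have hφc : Continuous fun x : Fin m → ℝ => φ x := φ.continuous_of_finiteDimensional
  constructor
  · rintro ⟨-, hp⟩ x hx hφ0
    by_contra hx0
    have hK := (hp {0} isCompact_singleton).image continuous_subtype_val
    obtain ⟨R, hR⟩ := hK.isBounded.subset_closedBall 0
    have hxn : (0:ℝ) < ‖x‖ := norm_pos_iff.mpr hx0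
    set t : ℝ := (|R| + 1) / ‖x‖ with ht
    have htpos : 0 ≤ t := by positivity
    have hmem : t • x ∈ Subtype.val ''
        ((fun x : {x : Fin m → ℝ // ∀ i, 0 ≤ x i} => φ x.1) ⁻¹' {0}) := by
      refine ⟨⟨t • x, fun i => mul_nonneg htpos (hx i)⟩, ?_, rfl⟩
      simp [map_smul, hφ0]
    have := hR hmem
    rw [mem_closedBall_zero_iff, norm_smul, Real.norm_eq_abs, abs_of_nonneg htpos, ht,
      div_mul_cancel₀ _ (ne_of_gt hxn)] at this
    have : |R| + 1 ≤ |R| := this.trans (le_abs_self R)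
    linarith
  · intro hker
    have hcont : Continuous (fun x : {x : Fin m → ℝ // ∀ i, 0 ≤ x i} => φ x.1) :=
      hφc.comp continuous_subtype_val
    refine ⟨hcont, ?_⟩
    -- key bound
    have horth_closed : IsClosed {x : Fin m → ℝ | ∀ i, 0 ≤ x i} := by
      have : {x : Fin m → ℝ | ∀ i, 0 ≤ x i} = ⋂ i, {x | 0 ≤ x i} := by
        ext x; simp
      rw [this]
      exact isClosed_iInter fun i => isClosed_le continuous_const (continuous_apply i)
    obtain ⟨c, hc, hbound⟩ : ∃ c : ℝ, 0 < c ∧ ∀ x : Fin m → ℝ, (∀ i, 0 ≤ x i) →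
        ‖x‖ ≤ c * ‖φ x‖ := by
      set S : Set (Fin m → ℝ) := {x | (∀ i, 0 ≤ x i) ∧ ‖x‖ = 1} with hS
      have hSclosed : IsClosed S :=
        horth_closed.inter (isClosed_eq continuous_norm continuous_const)
      have hScomp : IsCompact S := by
        refine (isCompact_closedBall (0 : Fin m → ℝ) 1).of_isClosed_subset hSclosed ?_
        intro x hxS
        rw [mem_closedBall_zero_iff]
        exact le_of_eq hxS.2
      rcases S.eq_empty_or_nonempty with hSe | hSne
      · refine ⟨1, one_pos, fun x hx => ?_⟩
        have : x = 0 := by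
          by_contra h0
          have hxn : (0:ℝ) < ‖x‖ := norm_pos_iff.mpr h0
          have : ‖x‖⁻¹ • x ∈ S := by
            refine ⟨fun i => mul_nonneg (by positivity) (hx i), ?_⟩
            rw [norm_smul, Real.norm_eq_abs, abs_of_nonneg (by positivity),
              inv_mul_cancel₀ (ne_of_gt hxn)]
          rw [hSe] at this; exact this
        simp [this]
      · obtain ⟨z, hzS, hz⟩ := hScomp.exists_isMinOn hSne
          ((hφc.norm).continuousOn)
        have hz0 : z ≠ 0 := by
          intro h; rw [h] at hzS; simpa using hzS.2
        have hεpos : 0 < ‖φ z‖ := by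
          rw [norm_pos_iff]
          intro h
          exact hz0 (hker z hzS.1 h)
        refine ⟨‖φ z‖⁻¹, by positivity, fun x hx => ?_⟩
        rcases eq_or_ne x 0 with rfl | hx0
        · simp
        · have hxn : (0:ℝ) < ‖x‖ := norm_pos_iff.mpr hx0
          have hu : ‖x‖⁻¹ • x ∈ S := by
            refine ⟨fun i => mul_nonneg (by positivity) (hx i), ?_⟩
            rw [norm_smul, Real.norm_eq_abs, abs_of_nonneg (by positivity),
              inv_mul_cancel₀ (ne_of_gt hxn)]
          have hmin : ‖φ z‖ ≤ ‖φ (‖x‖⁻¹ • x)‖ := hz hu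
          rw [map_smul, norm_smul, Real.norm_eq_abs, abs_of_nonneg (by positivity),
            inv_mul_eq_div, le_div_iff₀ hxn] at hmin
          rw [← inv_mul_le_iff₀ (inv_pos.mpr hεpos)] at *
          calc ‖φ z‖⁻¹⁻¹ * ‖x‖ = ‖φ z‖ * ‖x‖ := by rw [inv_inv]
            _ ≤ ‖φ x‖ := hmin
    intro K hK
    obtain ⟨R, hR⟩ := hK.isBounded.subset_closedBall 0
    set T : Set (Fin m → ℝ) := {x | (∀ i, 0 ≤ x i) ∧ φ x ∈ K} with hT
    have hTclosed : IsClosed T := horth_closed.inter (hK.isClosed.preimage hφc)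
    have hTsub : T ⊆ closedBall 0 (c * R) := by
      intro x hxT
      rw [mem_closedBall_zero_iff]
      have h1 : ‖φ x‖ ≤ R := by
        have := hR hxT.2
        rwa [mem_closedBall_zero_iff] at this
      calc ‖x‖ ≤ c * ‖φ x‖ := hbound x hxT.1
        _ ≤ c * R := mul_le_mul_of_nonneg_left h1 (le_of_lt hc)
    have hTcomp : IsCompact T :=
      (isCompact_closedBall (0 : Fin m → ℝ) (c * R)).of_isClosed_subset hTclosed hTsub
    rw [Topology.IsEmbedding.subtypeVal.isCompact_iff]
    have : Subtype.val '' ((fun x : {x : Fin m → ℝ // ∀ i, 0 ≤ x i} => φ x.1) ⁻¹' K) = T := by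
      ext y
      constructor
      · rintro ⟨⟨x, hx⟩, hxK, rfl⟩
        exact ⟨hx, hxK⟩
      · rintro ⟨hy, hyK⟩
        exact ⟨⟨y, hy⟩, hyK, rfl⟩
    rw [this]
    exact hTcomp
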